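/- Let M ∈ ℝ^{n×n}, b ∈ ℝⁿ, define F(x) := (M − I)x⁺ + x + b and S(x) := (M − I)·diag(sgn(x⁺)) + I. Then for all x, y ∈ ℝⁿ, ‖F(x) − F(y) − S(y)(x − y)‖ ≤ ‖M − I‖·‖x − y‖. -/

import Mathlib

noncomputable section

/-- `E n` is the n-dimensional Euclidean space over ℝ. -/
abbrev E (n : ℕ) := EuclideanSpace ℝ (Fin n)

variable {n : ℕ}

/-- componentwise positive part `x⁺` -/
def posPart (x : E n) : E n := WithLp.toLp 2 (fun i => max (x i) 0)

/-- componentwise negative part `x⁻` -/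
def negPart (x : E n) : E n := WithLp.toLp 2 (fun i => max (-(x i)) 0)

/-- the 0-1 vector `sgn(x⁺)` indicating positive components of `x` -/
def sgnPos (x : E n) : Fin n → ℝ := fun i => if 0 < x i then 1 else 0

/-- matrix-vector multiplication on Euclidean space -/
def mulV (M : Matrix (Fin n) (Fin n) ℝ) (x : E n) : E n := Matrix.toEuclideanLin M x

/-- operator norm of a matrix induced by the Euclidean norm -/
def opN (M : Matrix (Fin n) (Fin n) ℝ) : ℝ :=
  ‖LinearMap.toContinuousLinearMap (Matrix.toEuclideanLin M)‖

/-- the nonnegative orthant ℝⁿ₊ -/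
def nonnegOrthant (n : ℕ) : Set (E n) := {x | ∀ i, 0 ≤ x i}

/-- the simplicial cone A·ℝⁿ₊ -/
def simplicialCone (A : Matrix (Fin n) (Fin n) ℝ) : Set (E n) :=
  {y | ∃ x ∈ nonnegOrthant n, y = mulV A x}

/-- the dual cone K* of a set K -/
def dualCone (K : Set (E n)) : Set (E n) := {y | ∀ x ∈ K, 0 ≤ (inner ℝ y x : ℝ)}


lemma mulV_apply (M : Matrix (Fin n) (Fin n) ℝ) (x : E n) (i : Fin n) :
    mulV M x i = ∑ j, M i j * x j := by
  simp [mulV, Matrix.toEuclideanLin, Matrix.mulVec, dotProduct]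

lemma mulV_sub_vec (A : Matrix (Fin n) (Fin n) ℝ) (u v : E n) :
    mulV A u - mulV A v = mulV A (u - v) := by
  ext i
  simp [mulV_apply, mul_sub, Finset.sum_sub_distrib]

lemma mulV_addM (A B : Matrix (Fin n) (Fin n) ℝ) (v : E n) :
    mulV (A + B) v = mulV A v + mulV B v := by
  ext i
  simp [mulV_apply, add_mul, Finset.sum_add_distrib]

lemma mulV_one (v : E n) : mulV (1 : Matrix (Fin n) (Fin n) ℝ) v = v := by
  ext i
  simp [mulV_apply, Matrix.one_apply, ite_mul]

lemma mulV_mul (A B : Matrix (Fin n) (Fin n) ℝ) (v : E n) :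
    mulV (A * B) v = mulV A (mulV B v) := by
  ext i
  simp only [mulV_apply, Matrix.mul_apply, Finset.sum_mul, Finset.mul_sum]
  rw [Finset.sum_comm]
  apply Finset.sum_congr rfl; intro j _
  apply Finset.sum_congr rfl; intro k _
  ring

lemma norm_mulV_le (A : Matrix (Fin n) (Fin n) ℝ) (v : E n) :
    ‖mulV A v‖ ≤ opN A * ‖v‖ := by
  have h := (LinearMap.toContinuousLinearMap (Matrix.toEuclideanLin A)).le_opNorm v
  rw [LinearMap.coe_toContinuousLinearMap'] at h
  exact h

lemma norm_le_of_abs_le {u v : E n} (h : ∀ i, |u i| ≤ |v i|) : ‖u‖ ≤ ‖v‖ := by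
  rw [EuclideanSpace.norm_eq, EuclideanSpace.norm_eq]
  apply Real.sqrt_le_sqrt
  apply Finset.sum_le_sum
  intro i _
  have := h i
  simp only [Real.norm_eq_abs]
  nlinarith [abs_nonneg (u i), abs_nonneg (v i)]

theorem stmt11 (M : Matrix (Fin n) (Fin n) ℝ) (b : E n) (x y : E n) :
    ‖(mulV (M - 1) (posPart x) + x + b) - (mulV (M - 1) (posPart y) + y + b) -
        mulV ((M - 1) * Matrix.diagonal (sgnPos y) + 1) (x - y)‖ ≤
      opN (M - 1) * ‖x - y‖ := by
  set A := M - 1 with hA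
  set D := Matrix.diagonal (sgnPos y) with hD
  set w : E n := _root_.posPart x - _root_.posPart y - mulV D (x - y) with hw
  have h1 : mulV A w = mulV A (_root_.posPart x) - mulV A (_root_.posPart y) -
      mulV A (mulV D (x - y)) := by
    rw [hw]; simp only [mulV, map_sub]
  have hEq : (mulV A (_root_.posPart x) + x + b) - (mulV A (_root_.posPart y) + y + b) -
      mulV (A * D + 1) (x - y) = mulV A w := by
    rw [mulV_addM, mulV_mul, mulV_one, h1]
    abel
  rw [hEq]
  calc ‖mulV A w‖ ≤ opN A * ‖w‖ := norm_mulV_le A w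
    _ ≤ opN A * ‖x - y‖ := by
        apply mul_le_mul_of_nonneg_left _ (norm_nonneg _)
        apply norm_le_of_abs_le
        intro i
        have hDi : mulV D (x - y) i = sgnPos y i * (x i - y i) := by
          simp [hD, mulV_apply, Matrix.diagonal_apply, ite_mul, Finset.sum_ite_eq]
        have hwi : w i = max (x i) 0 - max (y i) 0 - sgnPos y i * (x i - y i) := by
          rw [hw]
          show _root_.posPart x i - _root_.posPart y i - mulV D (x - y) i = _
          rw [hDi]; simp [_root_.posPart]
        have hxy : (x - y) i = x i - y i := rfl
        rw [hwi, hxy]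
        simp only [sgnPos]
        rcases lt_or_ge 0 (y i) with hy | hy <;> rcases lt_or_ge 0 (x i) with hx | hx
        · rw [if_pos hy, max_eq_left hx.le, max_eq_left hy.le]
          rw [abs_le]
          constructor <;> nlinarith [le_abs_self (x i - y i), neg_abs_le (x i - y i)]
        · rw [if_pos hy, max_eq_right hx, max_eq_left hy.le]
          rw [abs_le]
          constructor <;> nlinarith [le_abs_self (x i - y i), neg_abs_le (x i - y i)]
        · rw [if_neg (not_lt.2 hy), max_eq_left hx.le, max_eq_right hy]
          rw [abs_le]
          constructor <;> nlinarith [le_abs_self (x i - y i), neg_abs_le (x i - y i)]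
        · rw [if_neg (not_lt.2 hy), max_eq_right hx, max_eq_right hy]
          rw [abs_le]
          constructor <;> nlinarith [le_abs_self (x i - y i), neg_abs_le (x i - y i)]
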